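/- There exists a finite Borel measure μ on [0,π] (the spectral measure of a weakly stationary process) such that the sequence V(2^r)/2^r converges to a finite positive limit as r → ∞, but the full sequence V(n)/n does not converge as n → ∞. -/

import Mathlib

open MeasureTheory Filter Set Topology

/-- Fejér-type kernel: `I_n(y) = sin²(ny/2)/sin²(y/2)` for `y ≠ 0`, `I_n(0) = n²`. -/
noncomputable def fejerKernel (n : ℕ) (y : ℝ) : ℝ :=
  if y = 0 then (n : ℝ) ^ 2 else Real.sin (n * y / 2) ^ 2 / Real.sin (y / 2) ^ 2

/-- Variance functional `V(n) = ∫_{[0,π]} I_n(y) dμ(y)`. -/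
noncomputable def varV (μ : Measure ℝ) (n : ℕ) : ℝ :=
  ∫ y in Icc 0 Real.pi, fejerKernel n y ∂μ

/-- `G(x) = μ([0,x])` for a measure `μ` on `[0,π]`. -/
noncomputable def specG (μ : Measure ℝ) (x : ℝ) : ℝ :=
  (μ (Icc 0 x)).toReal

/-- A function `L : (0,∞) → (0,∞)` is slowly varying at infinity if
`L(λx)/L(x) → 1` as `x → ∞` for every `λ > 0`. -/
def SlowlyVarying (L : ℝ → ℝ) : Prop :=
  ∀ lam : ℝ, 0 < lam → Tendsto (fun x => L (lam * x) / L x) atTop (𝓝 1)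


lemma abs_sin_nat_mul_le (n : ℕ) (x : ℝ) : |Real.sin (n * x)| ≤ n * |Real.sin x| := by
  induction n with
  | zero => simp
  | succ m ih =>
    have : ((m : ℝ) + 1) * x = m * x + x := by ring
    push_cast
    rw [this, Real.sin_add]
    calc |Real.sin (m*x) * Real.cos x + Real.cos (m*x) * Real.sin x|
        ≤ |Real.sin (m*x) * Real.cos x| + |Real.cos (m*x) * Real.sin x| := abs_add_le _ _
      _ ≤ |Real.sin (m*x)| * 1 + 1 * |Real.sin x| := by
          rw [abs_mul, abs_mul]
          gcongr
          · exact Real.abs_cos_le_one _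
          · exact Real.abs_cos_le_one _
      _ ≤ (m : ℝ) * |Real.sin x| * 1 + 1 * |Real.sin x| := by have := ih; gcongr
      _ = ((m : ℝ) + 1) * |Real.sin x| := by ring

lemma sin_sq_nat_mul_le (n : ℕ) (x : ℝ) : Real.sin (n * x) ^ 2 ≤ (n:ℝ) ^ 2 * Real.sin x ^ 2 := by
  have h := abs_sin_nat_mul_le n x
  have h1 : (0:ℝ) ≤ n * |Real.sin x| := by positivity
  nlinarith [abs_nonneg (Real.sin (n*x)), sq_abs (Real.sin (n*x)), sq_abs (Real.sin x)]

lemma sin_sq_two_pow (m : ℕ) : Real.sin (2 ^ (m+1) * Real.pi / 3) ^ 2 = 3/4 := by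
  induction m with
  | zero =>
    have : (2:ℝ)^1 * Real.pi / 3 = Real.pi - Real.pi/3 := by ring
    rw [this, Real.sin_pi_sub, Real.sin_pi_div_three]
    rw [div_pow, Real.sq_sqrt (by norm_num : (3:ℝ) ≥ 0)]
    norm_num
  | succ m ih =>
    have h2 : (2:ℝ)^(m+2) * Real.pi / 3 = 2 * (2^(m+1) * Real.pi / 3) := by ring
    rw [h2, Real.sin_two_mul]
    have hc := Real.sin_sq_add_cos_sq (2^(m+1) * Real.pi / 3)
    nlinarith [ih]

/-- terms of the variance sum: `gg a k = 2^k sin²(aπ/(3·2^k))` -/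
noncomputable def gg (a : ℝ) (k : ℕ) : ℝ := 2 ^ k * Real.sin (a * Real.pi / (3 * 2 ^ k)) ^ 2

lemma gg_nonneg (a : ℝ) (k : ℕ) : 0 ≤ gg a k := by unfold gg; positivity

lemma gg_le (a : ℝ) (k : ℕ) : gg a k ≤ a^2 * Real.pi^2 / 9 * (1/2)^k := by
  unfold gg
  have h := Real.sin_sq_le_sq (x := a * Real.pi / (3 * 2 ^ k))
  have h2 : (0:ℝ) < 2^k := by positivity
  have : (a * Real.pi / (3 * 2 ^ k))^2 = a^2 * Real.pi^2 / (9 * (2^k)^2) := by ring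
  rw [this] at h
  rw [div_pow, one_pow]
  calc (2:ℝ)^k * Real.sin (a * Real.pi / (3 * 2 ^ k)) ^ 2
      ≤ 2^k * (a^2 * Real.pi^2 / (9 * (2^k)^2)) := by gcongr
    _ = a^2 * Real.pi^2 / 9 / 2^k := by field_simp
    _ = a^2 * Real.pi^2 / 9 * (1 / 2^k) := by ring

lemma summable_gg (a : ℝ) : Summable (gg a) :=
  Summable.of_nonneg_of_le (gg_nonneg a) (gg_le a)
    ((summable_geometric_two).mul_left _)

/-- the tail-sum terms for `n = 3·2^r` -/
noncomputable def hh (t : ℕ) : ℝ := 2 ^ (t+1) * Real.sin (Real.pi / 2 ^ (t+1)) ^ 2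

lemma hh_nonneg (t : ℕ) : 0 ≤ hh t := by unfold hh; positivity

lemma hh_le (t : ℕ) : hh t ≤ Real.pi^2 / 2 * (1/2)^t := by
  unfold hh
  have h := Real.sin_sq_le_sq (x := Real.pi / 2 ^ (t+1))
  have : (Real.pi / 2 ^ (t+1))^2 = Real.pi^2 / (2^(t+1))^2 := by ring
  rw [this] at h
  rw [div_pow, one_pow]
  calc (2:ℝ)^(t+1) * Real.sin (Real.pi / 2 ^ (t+1)) ^ 2
      ≤ 2^(t+1) * (Real.pi^2 / (2^(t+1))^2) := by gcongr
    _ = Real.pi^2 / 2^(t+1) := by field_simp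
    _ = Real.pi^2 / 2 * (1 / 2^t) := by rw [pow_succ]; ring

lemma summable_hh : Summable hh :=
  Summable.of_nonneg_of_le hh_nonneg hh_le ((summable_geometric_two).mul_left _)

noncomputable def myY (k : ℕ) : ℝ := 2 * Real.pi / (3 * 2 ^ k)

noncomputable def myMu : Measure ℝ :=
  Measure.sum (fun k => ENNReal.ofReal (gg 1 k) • Measure.dirac (myY k))

lemma myY_mem (k : ℕ) : myY k ∈ Icc (0:ℝ) Real.pi := by
  unfold myY
  constructor
  · positivity
  · rw [div_le_iff₀ (by positivity)]
    have h1 : (1:ℝ) ≤ 2^k := one_le_pow₀ (by norm_num)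
    nlinarith [Real.pi_pos]

lemma myY_pos (k : ℕ) : 0 < myY k := by unfold myY; positivity

lemma sin_half_myY_pos (k : ℕ) : 0 < Real.sin (Real.pi / (3 * 2 ^ k)) := by
  apply Real.sin_pos_of_pos_of_lt_pi
  · positivity
  · rw [div_lt_iff₀ (by positivity)]
    have h1 : (1:ℝ) ≤ 2^k := one_le_pow₀ (by norm_num)
    nlinarith [Real.pi_pos]

instance myMu_finite : IsFiniteMeasure myMu := by
  constructor
  rw [myMu, Measure.sum_apply _ MeasurableSet.univ]
  have : ∀ k : ℕ, (ENNReal.ofReal (gg 1 k) • Measure.dirac (myY k)) univ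
      = ENNReal.ofReal (gg 1 k) := by
    intro k
    simp [Measure.smul_apply]
  rw [tsum_congr this, ← ENNReal.ofReal_tsum_of_nonneg (gg_nonneg 1) (summable_gg 1)]
  exact ENNReal.ofReal_lt_top

lemma fejer_meas (n : ℕ) : Measurable (fejerKernel n) := by
  unfold fejerKernel
  apply Measurable.ite
  · exact measurableSet_eq
  · exact measurable_const
  · exact ((Real.measurable_sin.comp ((measurable_id.const_mul _).div_const 2)).pow_const 2).div
      ((Real.measurable_sin.comp (measurable_id.div_const 2)).pow_const 2)

lemma fejer_nonneg (n : ℕ) (y : ℝ) : 0 ≤ fejerKernel n y := by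
  unfold fejerKernel; split <;> positivity

lemma fejer_le (n : ℕ) (y : ℝ) : fejerKernel n y ≤ (n:ℝ)^2 := by
  unfold fejerKernel
  split
  · exact le_refl _
  · rcases eq_or_ne (Real.sin (y/2)) 0 with h | h
    · simp [h]
    · rw [div_le_iff₀ (by positivity)]
      have := sin_sq_nat_mul_le n (y/2)
      have harg : (n:ℝ) * y / 2 = n * (y/2) := by ring
      rw [harg]
      linarith

lemma fejer_integrable (n : ℕ) (μ : Measure ℝ) [IsFiniteMeasure μ] :
    Integrable (fejerKernel n) μ := by
  refine Integrable.mono' (integrable_const ((n:ℝ)^2)) (fejer_meas n).aestronglyMeasurable ?_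
  filter_upwards with y
  rw [Real.norm_eq_abs, abs_of_nonneg (fejer_nonneg n y)]
  exact fejer_le n y

lemma myMu_restrict : myMu.restrict (Icc 0 Real.pi) = myMu := by
  rw [myMu, Measure.restrict_sum_of_countable]
  congr 1
  funext k
  rw [Measure.restrict_smul]
  classical
  rw [restrict_dirac' measurableSet_Icc, if_pos (myY_mem k)]

lemma fejer_myY (n : ℕ) (k : ℕ) :
    gg 1 k * fejerKernel n (myY k) = gg (n:ℝ) k := by
  have hne : myY k ≠ 0 := ne_of_gt (myY_pos k)
  have h2 : myY k / 2 = Real.pi / (3 * 2^k) := by unfold myY; ring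
  have h3 : (n:ℝ) * myY k / 2 = n * Real.pi / (3 * 2^k) := by unfold myY; ring
  rw [fejerKernel, if_neg hne, h2, h3]
  have hs := sin_half_myY_pos k
  unfold gg
  rw [one_mul]
  have hs2 : Real.sin (Real.pi / (3 * 2 ^ k)) ^ 2 ≠ 0 := (pow_pos hs 2).ne'
  rw [mul_assoc, mul_div_assoc', mul_div_cancel_left₀ _ hs2]

lemma varV_myMu (n : ℕ) : varV myMu n = ∑' k, gg (n:ℝ) k := by
  have : varV myMu n = ∫ y, fejerKernel n y ∂(myMu.restrict (Icc 0 Real.pi)) := rfl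
  have hint : Integrable (fejerKernel n) myMu := fejer_integrable n _
  rw [this, myMu_restrict]
  rw [show myMu = Measure.sum (fun k => ENNReal.ofReal (gg 1 k) • Measure.dirac (myY k)) from rfl]
    at hint ⊢
  rw [integral_sum_measure hint]
  apply tsum_congr
  intro k
  rw [integral_smul_measure, integral_dirac, ENNReal.toReal_ofReal (gg_nonneg 1 k),
    smul_eq_mul, fejer_myY]

noncomputable def Tp : ℝ := ∑' t, gg 1 t
noncomputable def Dv : ℝ := ∑' t, hh t

lemma varV_dyadic (r : ℕ) : varV myMu (2^r) = 3/4 * (2^r - 1) + 2^r * Tp := by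
  rw [varV_myMu]
  have hc : ((2^r : ℕ) : ℝ) = (2:ℝ)^r := by push_cast; rfl
  rw [hc]
  rw [← Summable.sum_add_tsum_nat_add r (summable_gg ((2:ℝ)^r))]
  have h1 : ∑ k ∈ Finset.range r, gg ((2:ℝ)^r) k = 3/4 * (2^r - 1) := by
    have hterm : ∀ k ∈ Finset.range r, gg ((2:ℝ)^r) k = 3/4 * 2^k := by
      intro k hk
      rw [Finset.mem_range] at hk
      obtain ⟨m, hm⟩ : ∃ m, r = k + (m+1) := ⟨r - k - 1, by omega⟩
      subst hm
      unfold gg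
      have harg : (2:ℝ)^(k+(m+1)) * Real.pi / (3 * 2^k) = 2^(m+1) * Real.pi / 3 := by
        rw [pow_add]
        field_simp
      rw [harg, sin_sq_two_pow m]
      ring
    rw [Finset.sum_congr rfl hterm, ← Finset.mul_sum,
      geom_sum_eq (by norm_num : (2:ℝ) ≠ 1) r]
    ring
  have h2 : ∑' t, gg ((2:ℝ)^r) (t + r) = 2^r * Tp := by
    have hterm : ∀ t : ℕ, gg ((2:ℝ)^r) (t + r) = 2^r * gg 1 t := by
      intro t
      unfold gg
      have harg : (2:ℝ)^r * Real.pi / (3 * 2^(t+r)) = 1 * Real.pi / (3 * 2^t) := by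
        rw [pow_add]
        field_simp
      rw [harg, pow_add]
      ring
    rw [tsum_congr hterm, tsum_mul_left]
    rfl
  rw [h1, h2]

lemma varV_triple (r : ℕ) : varV myMu (3 * 2^r) = 2^r * Dv := by
  rw [varV_myMu]
  have hc : ((3 * 2^r : ℕ) : ℝ) = 3 * (2:ℝ)^r := by push_cast; rfl
  rw [hc]
  rw [← Summable.sum_add_tsum_nat_add (r+1) (summable_gg (3 * (2:ℝ)^r))]
  have h1 : ∑ k ∈ Finset.range (r+1), gg (3 * (2:ℝ)^r) k = 0 := by
    apply Finset.sum_eq_zero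
    intro k hk
    rw [Finset.mem_range] at hk
    obtain ⟨m, hm⟩ : ∃ m, r = k + m := ⟨r - k, by omega⟩
    subst hm
    unfold gg
    have harg : 3 * (2:ℝ)^(k+m) * Real.pi / (3 * 2^k) = ((2^m : ℕ) : ℝ) * Real.pi := by
      push_cast
      rw [pow_add]
      field_simp
    rw [harg, Real.sin_nat_mul_pi]
    ring
  have h2 : ∑' t, gg (3 * (2:ℝ)^r) (t + (r+1)) = 2^r * Dv := by
    have hterm : ∀ t : ℕ, gg (3 * (2:ℝ)^r) (t + (r+1)) = 2^r * hh t := by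
      intro t
      unfold gg hh
      have harg : 3 * (2:ℝ)^r * Real.pi / (3 * 2^(t+(r+1))) = Real.pi / 2^(t+1) := by
        rw [show t + (r+1) = (t+1) + r by omega, pow_add]
        field_simp
      rw [harg, show t + (r+1) = (t+1) + r by omega, pow_add]
      ring
    rw [tsum_congr hterm, tsum_mul_left]
    rfl
  rw [h1, h2]
  ring

lemma sqrt3_lt : Real.sqrt 3 < 1.7321 := by
  rw [show (1.7321:ℝ) = Real.sqrt (1.7321^2) from (Real.sqrt_sq (by norm_num)).symm]
  apply Real.sqrt_lt_sqrt (by norm_num)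
  norm_num

lemma sqrt2_gt : (1.414:ℝ) < Real.sqrt 2 := by
  rw [show (1.414:ℝ) = Real.sqrt (1.414^2) from (Real.sqrt_sq (by norm_num)).symm]
  apply Real.sqrt_lt_sqrt (by norm_num)
  norm_num

lemma sqrt2_lt : Real.sqrt 2 < 1.415 := by
  rw [show (1.415:ℝ) = Real.sqrt (1.415^2) from (Real.sqrt_sq (by norm_num)).symm]
  apply Real.sqrt_lt_sqrt (by norm_num)
  norm_num

lemma Tp_lb : 13/4 - Real.sqrt 3 ≤ Tp := by
  have h0 : gg 1 0 = 3/4 := by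
    unfold gg
    norm_num
    rw [div_pow, Real.sq_sqrt (by norm_num : (3:ℝ) ≥ 0)]
    norm_num
  have h1 : gg 1 1 = 1/2 := by
    unfold gg
    norm_num
  have h2 : gg 1 2 = 2 - Real.sqrt 3 := by
    unfold gg
    norm_num
    rw [Real.sin_sq_eq_half_sub,
      show 2 * (Real.pi / 12) = Real.pi / 6 by ring, Real.cos_pi_div_six]
    ring
  have hsum : ∑ k ∈ Finset.range 3, gg 1 k ≤ Tp :=
    Summable.sum_le_tsum _ (fun i _ => gg_nonneg 1 i) (summable_gg 1)
  rw [Finset.sum_range_succ, Finset.sum_range_succ, Finset.sum_range_one, h0, h1, h2] at hsum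
  linarith

lemma Dv_ub : Dv ≤ 8 - 2 * Real.sqrt 2 + Real.pi^2 / 8 := by
  have hsplit := Summable.sum_add_tsum_nat_add 3 summable_hh
  have h0 : hh 0 = 2 := by
    unfold hh
    norm_num
  have h1 : hh 1 = 2 := by
    unfold hh
    norm_num
    rw [div_pow, Real.sq_sqrt (by norm_num : (2:ℝ) ≥ 0)]
    norm_num
  have h2 : hh 2 = 4 - 2 * Real.sqrt 2 := by
    unfold hh
    norm_num
    rw [div_pow, Real.sq_sqrt (by linarith [sqrt2_lt] : (0:ℝ) ≤ 2 - Real.sqrt 2)]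
    ring
  have htail : ∑' t, hh (t + 3) ≤ Real.pi^2 / 8 := by
    have hb : ∀ t : ℕ, hh (t + 3) ≤ Real.pi^2 / 16 * (1/2)^t := by
      intro t
      calc hh (t + 3) ≤ Real.pi^2 / 2 * (1/2)^(t+3) := hh_le (t+3)
        _ = Real.pi^2 / 16 * (1/2)^t := by ring
    calc ∑' t, hh (t + 3) ≤ ∑' t : ℕ, Real.pi^2 / 16 * (1/2)^t :=
          ((summable_nat_add_iff 3).2 summable_hh).tsum_le_tsum hb
            ((summable_geometric_two).mul_left _)
      _ = Real.pi^2 / 16 * 2 := by rw [tsum_mul_left, tsum_geometric_two]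
      _ = Real.pi^2 / 8 := by ring
  have : Dv = ∑ k ∈ Finset.range 3, hh k + ∑' t, hh (t + 3) := (hsplit).symm
  rw [Finset.sum_range_succ, Finset.sum_range_succ, Finset.sum_range_one, h0, h1, h2] at this
  rw [this]
  linarith

lemma myMu_compl : myMu (Icc 0 Real.pi)ᶜ = 0 := by
  rw [myMu, Measure.sum_apply _ measurableSet_Icc.compl]
  have : ∀ k : ℕ, (ENNReal.ofReal (gg 1 k) • Measure.dirac (myY k)) (Icc 0 Real.pi)ᶜ = 0 := by
    intro k
    rw [Measure.smul_apply, Measure.dirac_apply' _ measurableSet_Icc.compl,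
      indicator_of_notMem (by simp [myY_mem k])]
    simp
  simp [this]


/-- There exists a finite Borel measure `μ` on `[0,π]` such that `V(2^r)/2^r`
converges to a finite positive limit, but `V(n)/n` does not converge. -/
theorem dyadic_convergence_not_sufficient :
    ∃ μ : Measure ℝ, IsFiniteMeasure μ ∧ μ (Icc 0 Real.pi)ᶜ = 0 ∧
      (∃ c : ℝ, 0 < c ∧
        Tendsto (fun r : ℕ => varV μ (2 ^ r) / (2 ^ r : ℝ)) atTop (𝓝 c)) ∧
      ¬ ∃ c : ℝ, Tendsto (fun n : ℕ => varV μ n / (n : ℝ)) atTop (𝓝 c) := by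
  refine ⟨myMu, inferInstance, myMu_compl, ?_, ?_⟩
  · refine ⟨3/4 + Tp, ?_, ?_⟩
    · have : 0 ≤ Tp := tsum_nonneg (gg_nonneg 1)
      have hTp : 0 ≤ Tp := this
      linarith
    · have heq : ∀ r : ℕ, varV myMu (2^r) / (2^r : ℝ) = (3/4 + Tp) - 3/4 * (1/2)^r := by
        intro r
        rw [varV_dyadic]
        have h2 : (0:ℝ) < 2^r := by positivity
        have h3 : (1/2:ℝ)^r * 2^r = 1 := by rw [← mul_pow]; norm_num
        field_simp
        linear_combination 3 * h3
      simp only [heq]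
      have : Tendsto (fun r : ℕ => (3/4 + Tp) - 3/4 * (1/2:ℝ)^r) atTop
          (𝓝 ((3/4 + Tp) - 3/4 * 0)) :=
        tendsto_const_nhds.sub
          ((tendsto_pow_atTop_nhds_zero_of_lt_one (by norm_num) (by norm_num)).const_mul _)
      simpa using this
  · rintro ⟨c₀, hc⟩
    have h2r : Tendsto (fun r : ℕ => 2^r) atTop atTop :=
      tendsto_atTop_mono (fun r => (Nat.lt_two_pow_self (n := r)).le) tendsto_id
    have h3r : Tendsto (fun r : ℕ => 3 * 2^r) atTop atTop :=
      tendsto_atTop_mono (fun r => by have := Nat.lt_two_pow_self (n := r); simp only [id]; omega) tendsto_id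
    have ha : Tendsto (fun r : ℕ => varV myMu (2^r) / ((2^r : ℕ) : ℝ)) atTop (𝓝 c₀) :=
      hc.comp h2r
    have hb : Tendsto (fun r : ℕ => varV myMu (3 * 2^r) / ((3 * 2^r : ℕ) : ℝ)) atTop (𝓝 c₀) :=
      hc.comp h3r
    have ha' : Tendsto (fun r : ℕ => (3/4 + Tp) - 3/4 * (1/2:ℝ)^r) atTop (𝓝 c₀) := by
      have heq : (fun r : ℕ => varV myMu (2^r) / ((2^r : ℕ) : ℝ))
          = fun r : ℕ => (3/4 + Tp) - 3/4 * (1/2:ℝ)^r := by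
        funext r
        rw [varV_dyadic]
        push_cast
        have h2 : (0:ℝ) < 2^r := by positivity
        have h3 : (1/2:ℝ)^r * 2^r = 1 := by rw [← mul_pow]; norm_num
        field_simp
        linear_combination 3 * h3
      rwa [heq] at ha
    have hlim1 : c₀ = 3/4 + Tp := by
      have : Tendsto (fun r : ℕ => (3/4 + Tp) - 3/4 * (1/2:ℝ)^r) atTop
          (𝓝 ((3/4 + Tp) - 3/4 * 0)) :=
        tendsto_const_nhds.sub
          ((tendsto_pow_atTop_nhds_zero_of_lt_one (by norm_num) (by norm_num)).const_mul _)
      have := tendsto_nhds_unique ha' this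
      linarith [this]
    have hlim2 : c₀ = Dv / 3 := by
      have heq : (fun r : ℕ => varV myMu (3 * 2^r) / ((3 * 2^r : ℕ) : ℝ))
          = fun _ : ℕ => Dv / 3 := by
        funext r
        rw [varV_triple]
        push_cast
        have h2 : (0:ℝ) < 2^r := by positivity
        field_simp
      rw [heq] at hb
      exact tendsto_nhds_unique hb tendsto_const_nhds
    have hT := Tp_lb
    have hD := Dv_ub
    have hpi : Real.pi < 3.15 := by linarith [Real.pi_lt_d2]
    have hpi0 := Real.pi_pos
    nlinarith [sqrt3_lt, sqrt2_gt]
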